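/- The matrix ring M_k(F₂) over the field with two elements is generated as a ring by the two elements a = e₁₂ (the elementary matrix unit) and b = e₁₂ + e₂₃ + ⋯ + e_{k−1,k} + e_{k1} (a shift-type matrix), for k ≥ 2. -/

import Mathlib

open Matrix

section aux
open Fin.NatCast
variable (k : ℕ) [NeZero k]

lemma pow_shift14 (m : ℕ) :
    (∑ i : Fin k, Matrix.single i (i + 1) (1 : ZMod 2)) ^ m
      = ∑ i : Fin k, Matrix.single i (i + (m : Fin k)) 1 := by
  induction m with
  | zero =>
    ext i j
    simp only [pow_zero, Nat.cast_zero, add_zero, Matrix.one_apply, Matrix.sum_apply,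
      Matrix.single, Matrix.of_apply]
    rcases eq_or_ne i j with rfl | h
    · rw [if_pos rfl, Finset.sum_eq_single i (fun b _ hb => if_neg (by simp [hb])) 
        (fun h => absurd (Finset.mem_univ _) h)]
      simp
    · rw [if_neg h]
      exact (Finset.sum_eq_zero fun x _ => if_neg (by rintro ⟨rfl, rfl⟩; exact h rfl)).symm
  | succ n ih =>
    rw [pow_succ, ih, Finset.sum_mul]
    refine Finset.sum_congr rfl fun i _ => ?_
    rw [Finset.mul_sum, Finset.sum_eq_single (i + (n : Fin k))]
    · rw [Matrix.single_mul_single_same]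
      push_cast
      rw [add_assoc, mul_one]
    · intro j _ hj
      exact Matrix.single_mul_single_of_ne (h := Ne.symm hj) ..
    · intro h; exact absurd (Finset.mem_univ _) h

lemma unit_mem14 (p q : Fin k) :
    Matrix.single p q (1 : ZMod 2)
      = (∑ i : Fin k, Matrix.single i (i + 1) (1 : ZMod 2)) ^ ((-p).val)
        * Matrix.single (0 : Fin k) (1 : Fin k) (1 : ZMod 2)
        * (∑ i : Fin k, Matrix.single i (i + 1) (1 : ZMod 2)) ^ ((q - 1).val) := by
  rw [pow_shift14, pow_shift14, Fin.cast_val_eq_self, Fin.cast_val_eq_self]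
  rw [Finset.sum_mul, Finset.sum_eq_single p]
  · rw [show p + -p = (0 : Fin k) by abel, Matrix.single_mul_single_same, Finset.mul_sum,
      Finset.sum_eq_single (1 : Fin k)]
    · rw [Matrix.single_mul_single_same]
      rw [show (1 : Fin k) + (q - 1) = q by abel]
      norm_num
    · intro j _ hj
      exact Matrix.single_mul_single_of_ne (h := Ne.symm hj) ..
    · intro h; exact absurd (Finset.mem_univ _) h
  · intro i _ hi
    refine Matrix.single_mul_single_of_ne (h := fun h => hi ?_) ..
    have : i + -p + p = (0 : Fin k) + p := by rw [h]
    simpa using this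
  · intro h; exact absurd (Finset.mem_univ _) h

end aux

/-- `M_k(F₂)` is generated as a ring by `a = e₁₂` and the cyclic shift
`b = e₁₂ + e₂₃ + ⋯ + e_{k−1,k} + e_{k,1}`, for `k ≥ 2`. -/
theorem stmt14 (k : ℕ) (hk : 2 ≤ k) :
    Subring.closure
      ({Matrix.single (⟨0, by omega⟩ : Fin k) (⟨1, by omega⟩ : Fin k) (1 : ZMod 2),
        ∑ i : Fin k, Matrix.single i (i + ⟨1, by omega⟩) (1 : ZMod 2)} :
          Set (Matrix (Fin k) (Fin k) (ZMod 2))) = ⊤ := by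
  haveI : NeZero k := ⟨by omega⟩
  have h1 : (⟨1, by omega⟩ : Fin k) = 1 := by
    apply Fin.ext
    simp [Fin.val_one, Nat.mod_eq_of_lt (by omega : 1 < k)]
  have h0 : (⟨0, by omega⟩ : Fin k) = 0 := by
    apply Fin.ext
    simp
  rw [h0, h1, eq_top_iff]
  rintro M -
  have hA : Matrix.single (0 : Fin k) (1 : Fin k) (1 : ZMod 2) ∈
      Subring.closure ({Matrix.single (0 : Fin k) (1 : Fin k) (1 : ZMod 2),
        ∑ i : Fin k, Matrix.single i (i + 1) (1 : ZMod 2)} :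
          Set (Matrix (Fin k) (Fin k) (ZMod 2))) :=
    Subring.subset_closure (Set.mem_insert _ _)
  have hB : (∑ i : Fin k, Matrix.single i (i + 1) (1 : ZMod 2)) ∈
      Subring.closure ({Matrix.single (0 : Fin k) (1 : Fin k) (1 : ZMod 2),
        ∑ i : Fin k, Matrix.single i (i + 1) (1 : ZMod 2)} :
          Set (Matrix (Fin k) (Fin k) (ZMod 2))) :=
    Subring.subset_closure (Set.mem_insert_of_mem _ rfl)
  have key : ∀ p q : Fin k, Matrix.single p q (1 : ZMod 2) ∈
      Subring.closure ({Matrix.single (0 : Fin k) (1 : Fin k) (1 : ZMod 2),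
        ∑ i : Fin k, Matrix.single i (i + 1) (1 : ZMod 2)} :
          Set (Matrix (Fin k) (Fin k) (ZMod 2))) := by
    intro p q
    have h2 := mul_mem (mul_mem (pow_mem hB ((-p).val)) hA) (pow_mem hB ((q - 1).val))
    rwa [← unit_mem14] at h2
  rw [Matrix.matrix_eq_sum_single M]
  refine sum_mem fun i _ => sum_mem fun j _ => ?_
  have hc : M i j = 0 ∨ M i j = 1 := by
    have : ∀ c : ZMod 2, c = 0 ∨ c = 1 := by decide
    exact this _
  rcases hc with h | h
  · rw [h, Matrix.single_zero]; exact zero_mem _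
  · rw [h]; exact key i j
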